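/- Suppose additionally r₁ > 0 and r̄ > 0. Then R_t^{BM-PAW}(r₁,r₂) > R_t^{PAW}(r₁,r₂) holds if and only if δ·c₅₂·ε₁ + η·c₅₄·ε₂ > η·(1 − c₅₄')·(r̄α+β)/(r̄α); that is, the bribe condition of Theorem 3 exactly characterizes when the target pool strictly gains by accepting the bribe. -/

import Mathlib

/-- The bribe condition of Theorem 3 exactly characterizes when the target pool strictly gains by accepting the bribe. -/
theorem bmpaw_target_gain_iff
    (α β η δ γ r₁ r₂ rbar ε₁ ε₂ : ℝ)
    (hα : 0 < α) (hβ : 0 < β) (hη : 0 ≤ η) (hsum : α + β + η < 1)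
    (hδ : δ = 1 - α - β - η)
    (hγ : γ ∈ Set.Icc (0:ℝ) 1)
    (hr₁ : r₁ ∈ Set.Icc (0:ℝ) 1) (hr₂ : r₂ ∈ Set.Icc (0:ℝ) 1)
    (hrbar : rbar ∈ Set.Icc (0:ℝ) 1)
    (hε₁ : ε₁ ∈ Set.Icc (0:ℝ) 1) (hε₂ : ε₂ ∈ Set.Icc (0:ℝ) 1)
    (c52 c54 c52' c54' : ℝ)
    (hc52 : c52 = ((1 - r₂) * α + η + β + γ * δ) / (1 - r₂ * α))
    (hc54 : c54 = 1)
    (hc52' : c52' = ((1 - r₂) * α + β + γ * (δ + η)) / (1 - r₂ * α))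
    (hc54' : c54' = ((1 - r₂) * α + β + γ * δ) / (1 - r₂ * α))
    (RtBMPAW RtPAW : ℝ)
    (htBMPAW : RtBMPAW = η
      + r₁ * α * (δ / (1 - r₂ * α) + η / (1 - r₂ * α)) * (η / (1 - r₂ * α))
      + r₁ * α * (ε₁ * c52 * (δ / (1 - r₂ * α)) + ε₂ * c54 * (η / (1 - r₂ * α)))
        * (rbar * α / (rbar * α + β)))
    (htPAW : RtPAW = η
      + r₁ * α * (δ / (1 - r₂ * α)) * (η / (1 - r₂ * α))
      + r₁ * α * (η / (1 - r₂ * α)) * (1 - c54' + η / (1 - r₂ * α)))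
    (hr₁pos : 0 < r₁) (hrbarpos : 0 < rbar)
    :
    RtBMPAW > RtPAW ↔
      δ * c52 * ε₁ + η * c54 * ε₂ > η * (1 - c54') * ((rbar * α + β) / (rbar * α)) := by
  have hD : 0 < 1 - r₂ * α := by nlinarith [hr₂.1, hr₂.2, hα.le]
  have hK : 0 < rbar * α + β := by positivity
  have hrα : 0 < rbar * α := by positivity
  have hC : 0 < r₁ * α * (rbar * α) / ((1 - r₂ * α) * (rbar * α + β)) := by positivity
  have key : RtBMPAW - RtPAW =
      (r₁ * α * (rbar * α) / ((1 - r₂ * α) * (rbar * α + β))) *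
        ((δ * c52 * ε₁ + η * c54 * ε₂) - η * (1 - c54') * ((rbar * α + β) / (rbar * α))) := by
    rw [htBMPAW, htPAW]
    generalize 1 - r₂ * α = D at hD ⊢
    field_simp [hD.ne', hK.ne', hrα.ne']
    ring
  constructor
  · intro h
    rw [gt_iff_lt, ← sub_pos]
    have h2 : 0 < RtBMPAW - RtPAW := by linarith
    rw [key] at h2
    by_contra hc
    push_neg at hc
    nlinarith
  · intro h
    rw [gt_iff_lt, ← sub_pos, key]
    exact mul_pos hC (by linarith)
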